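/- Let d_1, d_2 : k(X) → k(X) be two derivations. Assume that k(X)^{d_1} = k(c, b_1, …, b_s), where c, b_1, …, b_s ∈ k(X) are algebraically independent over k, d_2(b_1) = ⋯ = d_2(b_s) = 0, and d_2(c) ≠ 0. Then k(X)^{d_1} ∩ k(X)^{d_2} = k(b_1, …, b_s). -/

import Mathlib

open MvPolynomial

set_option synthInstance.maxHeartbeats 400000
set_option maxHeartbeats 1000000

/-- Chain rule: for a derivation `D` on a field `F` vanishing on an intermediate
field `K`, and `p : K[X]`, we have `D (p(a)) = p'(a) * D a`. -/
private lemma chain_rule {k F : Type*} [Field k] [Field F] [Algebra k F]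
    (D : Derivation k F F) (K : IntermediateField k F)
    (hK : ∀ x : K, D (algebraMap K _ x) = 0) (a : F) (p : Polynomial K) :
    D (Polynomial.aeval a p) = Polynomial.aeval a (Polynomial.derivative p) * D a := by
  induction p using Polynomial.induction_on' with
  | add p q hp hq =>
    simp only [Polynomial.derivative_add, map_add, hp, hq, add_mul]
  | monomial n r =>
    rw [Polynomial.aeval_monomial, Polynomial.derivative_monomial, Polynomial.aeval_monomial,
      Derivation.leibniz, hK, smul_zero, add_zero, Derivation.leibniz_pow,
      map_mul, map_natCast]
    simp only [smul_eq_mul, nsmul_eq_mul]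
    ring

/-- A derivation vanishing on a generating set vanishes on the generated
intermediate field. -/
private lemma vanish_on_adjoin {k F : Type*} [Field k] [Field F] [Algebra k F]
    (D : Derivation k F F) (S : Set F) (hS : ∀ x ∈ S, D x = 0) :
    ∀ x ∈ IntermediateField.adjoin k S, D x = 0 := by
  intro x hx
  induction hx using IntermediateField.adjoin_induction with
  | mem y hy => exact hS y hy
  | algebraMap r => exact D.map_algebraMap r
  | add y z _ _ hy hz => rw [map_add, hy, hz, add_zero]
  | inv y _ hy => rw [Derivation.leibniz_inv, hy, smul_zero]
  | mul y z _ _ hy hz => rw [Derivation.leibniz, hy, hz, smul_zero, smul_zero, add_zero]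

/-- If `P * Q' = P' * Q` with `Q ≠ 0` over a char-zero field, then `P` and `Q` are
proportional: `P = C a * g`, `Q = C e * g`. -/
private lemma prop_of_wronskian_eq_zero {K : Type*} [Field K] [CharZero K]
    {P Q : Polynomial K} (hQ : Q ≠ 0)
    (h : P * Polynomial.derivative Q = Polynomial.derivative P * Q) :
    ∃ (a e : K) (g : Polynomial K), e ≠ 0 ∧
      P = Polynomial.C a * g ∧ Q = Polynomial.C e * g := by
  classical
  set d := GCDMonoid.gcd P Q with hd
  have hd0 : d ≠ 0 := gcd_ne_zero_of_right hQ
  set P₁ := P / d with hP₁def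
  set Q₁ := Q / d with hQ₁def
  have hP : d * P₁ = P := EuclideanDomain.mul_div_cancel' hd0 (gcd_dvd_left P Q)
  have hQd : d * Q₁ = Q := EuclideanDomain.mul_div_cancel' hd0 (gcd_dvd_right P Q)
  have hcop : IsCoprime P₁ Q₁ := isCoprime_div_gcd_div_gcd hQ
  have hQ₁0 : Q₁ ≠ 0 := right_div_gcd_ne_zero hQ
  have key : P₁ * Polynomial.derivative Q₁ = Polynomial.derivative P₁ * Q₁ := by
    have h2 : (d * d) * (P₁ * Polynomial.derivative Q₁)
        = (d * d) * (Polynomial.derivative P₁ * Q₁) := by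
      have h' := h
      rw [← hP, ← hQd, Polynomial.derivative_mul, Polynomial.derivative_mul] at h'
      linear_combination h'
    exact mul_left_cancel₀ (mul_ne_zero hd0 hd0) h2
  have hdvd : Q₁ ∣ Polynomial.derivative Q₁ := by
    refine hcop.symm.dvd_of_dvd_mul_left ?_
    exact ⟨Polynomial.derivative P₁, by rw [key, mul_comm]⟩
  have hQ₁d : Polynomial.derivative Q₁ = 0 :=
    Polynomial.eq_zero_of_dvd_of_degree_lt hdvd (Polynomial.degree_derivative_lt hQ₁0)
  have hP₁d : Polynomial.derivative P₁ = 0 := by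
    have : Polynomial.derivative P₁ * Q₁ = 0 := by rw [← key, hQ₁d, mul_zero]
    rcases mul_eq_zero.mp this with h' | h'
    · exact h'
    · exact absurd h' hQ₁0
  have hQ₁C : Q₁ = Polynomial.C (Q₁.coeff 0) :=
    Polynomial.eq_C_of_natDegree_eq_zero
      (Polynomial.natDegree_eq_zero_of_derivative_eq_zero hQ₁d)
  have hP₁C : P₁ = Polynomial.C (P₁.coeff 0) :=
    Polynomial.eq_C_of_natDegree_eq_zero
      (Polynomial.natDegree_eq_zero_of_derivative_eq_zero hP₁d)
  refine ⟨P₁.coeff 0, Q₁.coeff 0, d, ?_, ?_, ?_⟩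
  · intro h0
    apply hQ₁0
    rw [hQ₁C, h0, map_zero]
  · rw [← hP, mul_comm]; exact congrArg (· * d) hP₁C
  · rw [← hQd, mul_comm]; exact congrArg (· * d) hQ₁C

/-- Transcendence over `Algebra.adjoin` lifts to the generated intermediate field. -/
private lemma transcendental_intermediateField {k F : Type*} [Field k] [Field F] [Algebra k F]
    {ι : Type*} (b : ι → F) {c : F}
    (hc : Transcendental (Algebra.adjoin k (Set.range b)) c) :
    Transcendental (IntermediateField.adjoin k (Set.range b)) c := by
  set A := Algebra.adjoin k (Set.range b) with hA
  set K := IntermediateField.adjoin k (Set.range b) with hKdef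
  have hAK : A ≤ K.toSubalgebra := IntermediateField.algebra_adjoin_le_adjoin k _
  letI : Algebra A K := (Subalgebra.inclusion hAK).toAlgebra
  haveI : IsScalarTower A K F := IsScalarTower.of_algebraMap_eq fun x => rfl
  have hinj : Function.Injective (algebraMap A K) := fun x y hxy => by
    apply Subtype.ext
    have : ((algebraMap A K x : K) : F) = ((algebraMap A K y : K) : F) := by rw [hxy]
    exact this
  haveI : IsFractionRing A K := by
    refine ⟨fun y => ?_, fun z => ?_, fun {x y} hxy => ⟨1, by rw [hinj hxy]⟩⟩
    · rw [isUnit_iff_ne_zero]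
      intro h0
      have : (y : A) = 0 := hinj (by rw [h0, map_zero])
      exact nonZeroDivisors.ne_zero y.2 this
    · have hz : (z : F) ∈ IntermediateField.adjoin k (Set.range b) := z.2
      rw [IntermediateField.mem_adjoin_range_iff] at hz
      obtain ⟨r, s, hrs⟩ := hz
      by_cases hs : MvPolynomial.aeval b s = 0
      · refine ⟨⟨0, 1⟩, ?_⟩
        have : (z : F) = 0 := by rw [hrs, hs, div_zero]
        have hz0 : z = 0 := Subtype.ext this
        simp [hz0]
      · have hrmem : MvPolynomial.aeval b r ∈ A := by
          rw [hA, Algebra.adjoin_range_eq_range_aeval]; exact ⟨r, rfl⟩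
        have hsmem : MvPolynomial.aeval b s ∈ A := by
          rw [hA, Algebra.adjoin_range_eq_range_aeval]; exact ⟨s, rfl⟩
        have hsne : (⟨MvPolynomial.aeval b s, hsmem⟩ : A) ≠ 0 := by
          intro h0
          exact hs (congrArg Subtype.val h0)
        refine ⟨⟨⟨MvPolynomial.aeval b r, hrmem⟩,
          ⟨⟨MvPolynomial.aeval b s, hsmem⟩, mem_nonZeroDivisors_of_ne_zero hsne⟩⟩, ?_⟩
        apply Subtype.ext
        show (z : F) * MvPolynomial.aeval b s = MvPolynomial.aeval b r
        rw [hrs, div_mul_cancel₀ _ hs]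
  intro halg
  exact hc ((IsFractionRing.isAlgebraic_iff A K F).mpr halg)

/-- Let `d₁, d₂` be derivations of `k(X) = k(x_0,…,x_{n-1})`. If
`k(X)^{d₁} = k(c, b_1, …, b_s)` for elements `c, b_1, …, b_s` algebraically independent
over `k` with `d₂(b_i) = 0` for all `i` and `d₂(c) ≠ 0`, then
`k(X)^{d₁} ∩ k(X)^{d₂} = k(b_1, …, b_s)`. -/
theorem stmt_8 {k : Type*} [Field k] [CharZero k] (n : ℕ) (hn : 3 ≤ n)
    (d₁ d₂ : Derivation k (FractionRing (MvPolynomial (Fin n) k))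
      (FractionRing (MvPolynomial (Fin n) k)))
    (s : ℕ) (c : FractionRing (MvPolynomial (Fin n) k))
    (b : Fin s → FractionRing (MvPolynomial (Fin n) k))
    (hind : AlgebraicIndependent k (Fin.cons c b : Fin (s + 1) → _))
    (h1 : {f : FractionRing (MvPolynomial (Fin n) k) | d₁ f = 0}
      = ↑(IntermediateField.adjoin k (insert c (Set.range b))))
    (hb : ∀ i, d₂ (b i) = 0) (hc : d₂ c ≠ 0) :
    {f : FractionRing (MvPolynomial (Fin n) k) | d₁ f = 0}
        ∩ {f : FractionRing (MvPolynomial (Fin n) k) | d₂ f = 0}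
      = ↑(IntermediateField.adjoin k (Set.range b)) := by
  set K := IntermediateField.adjoin k (Set.range b) with hKdef
  -- d₂ vanishes on K
  have hKvanish : ∀ x ∈ K, d₂ x = 0 := by
    refine vanish_on_adjoin d₂ _ ?_
    rintro x ⟨i, rfl⟩
    exact hb i
  -- algebraic independence of b
  have hbind : AlgebraicIndependent k b := by
    have h := hind.comp Fin.succ (Fin.succ_injective s)
    have heq : (Fin.cons c b ∘ Fin.succ : Fin s → _) = b := by
      funext i; simp [Function.comp]
    rwa [heq] at h
  -- transcendence of c over K
  have hopt : AlgebraicIndependent k (fun o : Option (Fin s) => o.elim c b) := by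
    have := hind.comp (finSuccEquiv s).symm (Equiv.injective _)
    convert this using 1
    funext o
    cases o with
    | none => simp
    | some i => simp
  have htransA : Transcendental (Algebra.adjoin k (Set.range b)) c :=
    (hbind.option_iff_transcendental c).mp hopt
  have htransK : Transcendental K c := transcendental_intermediateField b htransA
  haveI : CharZero K := charZero_of_injective_algebraMap (algebraMap k K).injective
  ext f
  simp only [Set.mem_inter_iff, Set.mem_setOf_eq, SetLike.mem_coe]
  constructor
  · rintro ⟨hf1, hf2⟩
    -- f ∈ k(c, b)
    have hfmem : f ∈ IntermediateField.adjoin k (insert c (Set.range b)) := by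
      have : f ∈ {f : FractionRing (MvPolynomial (Fin n) k) | d₁ f = 0} := hf1
      rw [h1] at this
      exact this
    have hins : insert c (Set.range b) = Set.range b ∪ {c} := by
      rw [Set.insert_eq, Set.union_comm]
    rw [hins, ← IntermediateField.adjoin_adjoin_left] at hfmem
    have hfmem' : f ∈ IntermediateField.adjoin K {c} := hfmem
    rw [IntermediateField.mem_adjoin_simple_iff] at hfmem'
    obtain ⟨P, Q, hfeq⟩ := hfmem'
    by_cases hQc : (Polynomial.aeval c Q : FractionRing (MvPolynomial (Fin n) k)) = 0
    · rw [hfeq, hQc, div_zero]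
      exact zero_mem K
    · have hQ0 : Q ≠ 0 := by
        intro h0
        exact hQc (by rw [h0, map_zero])
      have hKv : ∀ x : K, d₂ (algebraMap K _ x) = 0 := fun x => hKvanish x x.2
      have hfQ : f * Polynomial.aeval c Q = Polynomial.aeval c P := by
        rw [hfeq, div_mul_cancel₀ _ hQc]
      have h3 : f * d₂ (Polynomial.aeval c Q) = d₂ (Polynomial.aeval c P) := by
        have h' := congrArg d₂ hfQ
        rwa [Derivation.leibniz, hf2, smul_zero, add_zero, smul_eq_mul] at h'
      rw [chain_rule d₂ K hKv c Q, chain_rule d₂ K hKv c P] at h3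
      have h4 : f * Polynomial.aeval c (Polynomial.derivative Q)
          = Polynomial.aeval c (Polynomial.derivative P) := by
        have := h3
        rw [← mul_assoc] at this
        exact mul_right_cancel₀ hc this
      have h5 : Polynomial.aeval c (P * Polynomial.derivative Q)
          = Polynomial.aeval c (Polynomial.derivative P * Q) := by
        rw [map_mul, map_mul]
        calc Polynomial.aeval c P * Polynomial.aeval c (Polynomial.derivative Q)
            = (f * Polynomial.aeval c Q) * Polynomial.aeval c (Polynomial.derivative Q) := by
              rw [hfQ]
          _ = (f * Polynomial.aeval c (Polynomial.derivative Q)) * Polynomial.aeval c Q := by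
              ring
          _ = Polynomial.aeval c (Polynomial.derivative P) * Polynomial.aeval c Q := by
              rw [h4]
      have h6 : P * Polynomial.derivative Q = Polynomial.derivative P * Q :=
        transcendental_iff_injective.mp htransK h5
      obtain ⟨a, e, g, he, hPg, hQg⟩ := prop_of_wronskian_eq_zero hQ0 h6
      have hQcval : (Polynomial.aeval c Q : FractionRing (MvPolynomial (Fin n) k))
          = algebraMap K _ e * Polynomial.aeval c g := by
        rw [hQg, map_mul, Polynomial.aeval_C]
      have hPcval : (Polynomial.aeval c P : FractionRing (MvPolynomial (Fin n) k))
          = algebraMap K _ a * Polynomial.aeval c g := by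
        rw [hPg, map_mul, Polynomial.aeval_C]
      have hgc : (Polynomial.aeval c g : FractionRing (MvPolynomial (Fin n) k)) ≠ 0 := by
        intro h0
        apply hQc
        rw [hQcval, h0, mul_zero]
      have : f = algebraMap K _ (a / e) := by
        rw [hfeq, hPcval, hQcval, map_div₀, mul_comm (algebraMap K _ a),
          mul_comm (algebraMap K _ e), mul_div_mul_left _ _ hgc]
      rw [this]
      exact (a / e).2
  · intro hf
    constructor
    · have : f ∈ IntermediateField.adjoin k (insert c (Set.range b)) :=
        IntermediateField.adjoin.mono k _ _ (Set.subset_insert c _) hf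
      have : f ∈ (IntermediateField.adjoin k (insert c (Set.range b)) : Set (FractionRing (MvPolynomial (Fin n) k))) := this
      rw [← h1] at this
      exact this
    · exact hKvanish f hf
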